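/- There exists a constant C = C(α) such that for all k₁, k₂, k₃ ∈ ℤ, all j₁, j₂, j₃ ∈ ℤ_{≥0}, and all functions f₁, f₂ ∈ L²(ℝ²) with f_i supported in V_{k_i}^{j_i} (i = 1,2), one has ‖1_{V_{k₃}^{j₃}} · (f₁ * f₂)‖_{L²} ≤ C · min(|U_{k₁}|, |U_{k₂}|, |U_{k₃}|)^{1/2} · 2^{min(j₁,j₂,j₃)/2} · ‖f₁‖_{L²} ‖f₂‖_{L²}. -/

import Mathlib

open MeasureTheory Set
open scoped ENNReal

noncomputable section

/-- The sequence `n₀ = 0`, `n₁ = 4`, `n_{k+1} = n_k + n_k^{1/2}` for `k ≥ 1`. -/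
def nseq : ℕ → ℝ
  | 0 => 0
  | 1 => 4
  | k + 2 => nseq (k + 1) + Real.sqrt (nseq (k + 1))

/-- Extension of `nseq` to `ℤ` by `n_{-k} = -n_k`. -/
def nZ : ℤ → ℝ := fun k => if 0 ≤ k then nseq k.toNat else -nseq (-k).toNat

/-- The dispersion relation `ω(ξ) = -ξ|ξ|^α`. -/
def omega (α ξ : ℝ) : ℝ := -ξ * |ξ| ^ α

/-- The resonance function `Ω(ξ₁,ξ₂) = -ω(ξ₁+ξ₂) + ω(ξ₁) + ω(ξ₂)`. -/
def Omega (α ξ₁ ξ₂ : ℝ) : ℝ := -omega α (ξ₁ + ξ₂) + omega α ξ₁ + omega α ξ₂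

/-- The frequency sets `U_k`. -/
def Uset (k : ℤ) : Set ℝ :=
  if 1 ≤ k then
    {ν : ℝ | |ν| ∈ Set.Icc ((5 * nZ (k - 1) + nZ k) / 6) ((5 * nZ (k + 1) + nZ k) / 6)}
  else {ν : ℝ | |ν| ∈ Set.Icc ((2 : ℝ) ^ (k + 1)) ((2 : ℝ) ^ (k + 3))}

/-- The modulation sets `J_j`: `J₀ = [-2,2]` and `J_j = {|ν| ∈ [2^{j-1}, 2^{j+1}]}`. -/
def Jset : ℕ → Set ℝ
  | 0 => Set.Icc (-2) 2
  | j + 1 => {ν : ℝ | |ν| ∈ Set.Icc ((2 : ℝ) ^ j) ((2 : ℝ) ^ (j + 2))}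

/-- The trilinear form
`J(f,g,h) = ∫ f(ξ₁,μ₁) g(ξ₂,μ₂) h(ξ₁+ξ₂, μ₁+μ₂+Ω(ξ₁,ξ₂))`. -/
def Jnt (α : ℝ) (f g h : ℝ × ℝ → ℂ) : ℂ :=
  ∫ p : (ℝ × ℝ) × (ℝ × ℝ),
    f p.1 * g p.2 * h (p.1.1 + p.2.1, p.1.2 + p.2.2 + Omega α p.1.1 p.2.1)

/-- The `L²(ℝ²)` norm, as a real number. -/
def L2N (f : ℝ × ℝ → ℂ) : ℝ := (eLpNorm f 2 volume).toReal

/-- `d_α(k₁,k₂;k₃) = inf { ||ξ₁|^α - |ξ₂|^α| : ξ₁ ∈ U_{k₁}, ξ₂ ∈ U_{k₂}, ξ₁+ξ₂ ∈ U_{k₃} }`. -/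
def dalpha (α : ℝ) (k₁ k₂ k₃ : ℤ) : ℝ :=
  sInf ((fun p : ℝ × ℝ => |(|p.1| ^ α) - (|p.2| ^ α)|) ''
    {p : ℝ × ℝ | p.1 ∈ Uset k₁ ∧ p.2 ∈ Uset k₂ ∧ p.1 + p.2 ∈ Uset k₃})

/-- Convolution on `ℝ²`. -/
def conv2 (f g : ℝ × ℝ → ℂ) : ℝ × ℝ → ℂ :=
  fun q => ∫ p : ℝ × ℝ, f p * g (q.1 - p.1, q.2 - p.2)

/-- The sets `V_k^j = {(ξ,τ) : ξ ∈ U_k, τ - ω(ξ) ∈ J_j}`. -/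
def Vset (α : ℝ) (k : ℤ) (j : ℕ) : Set (ℝ × ℝ) :=
  {q : ℝ × ℝ | q.1 ∈ Uset k ∧ q.2 - omega α q.1 ∈ Jset j}

/-- The median of three natural numbers. -/
def med3 (a b c : ℕ) : ℕ := a + b + c - max (max a b) c - min (min a b) c

lemma measurable_omega (α : ℝ) : Measurable (omega α) := by
  unfold omega
  exact (measurable_id.neg).mul (measurable_abs.pow_const α)

lemma measurableSet_Jset (j : ℕ) : MeasurableSet (Jset j) := by
  cases j with
  | zero => exact measurableSet_Icc
  | succ j => exact measurable_abs measurableSet_Icc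

lemma measurableSet_Uset (k : ℤ) : MeasurableSet (Uset k) := by
  unfold Uset
  split
  · exact measurable_abs measurableSet_Icc
  · exact measurable_abs measurableSet_Icc

lemma measurableSet_Vset (α : ℝ) (k : ℤ) (j : ℕ) : MeasurableSet (Vset α k j) := by
  have h1 : Vset α k j = (fun q : ℝ×ℝ => q.1) ⁻¹' Uset k ∩
      (fun q : ℝ×ℝ => q.2 - omega α q.1) ⁻¹' Jset j := rfl
  rw [h1]
  exact (measurable_fst (measurableSet_Uset k)).inter
    ((measurable_snd.sub ((measurable_omega α).comp measurable_fst)) (measurableSet_Jset j))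

lemma volume_Jset_le (j : ℕ) : volume (Jset j) ≤ ENNReal.ofReal (2 ^ (j + 2)) := by
  have hsub : Jset j ⊆ Set.Icc (-(2:ℝ)^(j+1)) ((2:ℝ)^(j+1)) := by
    cases j with
    | zero =>
      intro x hx
      simp only [Jset] at hx
      norm_num at hx ⊢
      exact hx
    | succ j =>
      intro x hx
      have h2 : |x| ≤ (2:ℝ)^(j+2) := hx.2
      exact abs_le.mp h2
  calc volume (Jset j) ≤ volume (Set.Icc (-(2:ℝ)^(j+1)) ((2:ℝ)^(j+1))) := measure_mono hsub
    _ = ENNReal.ofReal ((2:ℝ)^(j+1) - (-(2:ℝ)^(j+1))) := Real.volume_Icc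
    _ = ENNReal.ofReal (2 ^ (j + 2)) := by ring_nf

lemma volume_Uset_ne_top (k : ℤ) : volume (Uset k) ≠ ⊤ := by
  have : ∃ b : ℝ, Uset k ⊆ Set.Icc (-b) b := by
    unfold Uset
    split
    · exact ⟨_, fun x hx => abs_le.mp hx.2⟩
    · exact ⟨_, fun x hx => abs_le.mp hx.2⟩
  obtain ⟨b, hb⟩ := this
  exact ((measure_mono hb).trans_lt measure_Icc_lt_top).ne

lemma volume_Jset_ne_top (j : ℕ) : volume (Jset j) ≠ ⊤ :=
  ((volume_Jset_le j).trans_lt ENNReal.ofReal_lt_top).ne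

/-- volume of preimage of a set under `y ↦ σ y + d`, `σ = ±1`. -/
lemma vol_affine_preimage (σ d : ℝ) (hσ : σ = 1 ∨ σ = -1) (J : Set ℝ) :
    volume ((fun y => σ * y + d) ⁻¹' J) = volume J := by
  rcases hσ with h | h <;> subst h
  · have : (fun y : ℝ => 1 * y + d) = (fun y : ℝ => y + d) := by funext y; ring
    rw [this]
    exact measure_preimage_add_right volume d J
  · have : (fun y : ℝ => -1 * y + d) = (fun z : ℝ => z + d) ∘ (fun y : ℝ => -y) := by
      funext y; simp only [Function.comp_apply]; ring
    rw [this, Set.preimage_comp]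
    rw [show (fun y : ℝ => -y) = Neg.neg from rfl]
    rw [MeasureTheory.Measure.measure_preimage_neg]
    exact measure_preimage_add_right volume d J

/-- The key fiber bound. -/
lemma fiber_bound (α : ℝ) (k₁ k₂ : ℤ) (j₁ j₂ : ℕ) (σ : ℝ) (hσ : σ = 1 ∨ σ = -1) (c : ℝ × ℝ) :
    volume {p : ℝ × ℝ | p ∈ Vset α k₁ j₁ ∧ (σ * p.1 + c.1, σ * p.2 + c.2) ∈ Vset α k₂ j₂} ≤
      min (volume (Uset k₁)) (volume (Uset k₂)) * min (volume (Jset j₁)) (volume (Jset j₂)) := by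
  have hσm : Measurable (fun p : ℝ × ℝ => (σ * p.1 + c.1, σ * p.2 + c.2)) :=
    ((measurable_const.mul measurable_fst).add_const c.1).prod
      ((measurable_const.mul measurable_snd).add_const c.2)
  set S : Set (ℝ × ℝ) :=
    {p : ℝ × ℝ | p ∈ Vset α k₁ j₁ ∧ (σ * p.1 + c.1, σ * p.2 + c.2) ∈ Vset α k₂ j₂} with hSdef
  have hS : MeasurableSet S := by
    have : S = Vset α k₁ j₁ ∩
        (fun p : ℝ × ℝ => (σ * p.1 + c.1, σ * p.2 + c.2)) ⁻¹' Vset α k₂ j₂ := rfl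
    rw [this]
    exact (measurableSet_Vset α k₁ j₁).inter (hσm (measurableSet_Vset α k₂ j₂))
  set T : Set ℝ := Uset k₁ ∩ (fun x => σ * x + c.1) ⁻¹' Uset k₂ with hTdef
  have hT : MeasurableSet T :=
    (measurableSet_Uset k₁).inter
      ((measurable_const.mul measurable_id).add_const c.1 (measurableSet_Uset k₂))
  have hprod : (volume : Measure (ℝ × ℝ)) = (volume : Measure ℝ).prod volume :=
    Measure.volume_eq_prod ℝ ℝ
  rw [hprod, Measure.prod_apply (by exact hS)]
  have key : ∀ x : ℝ, volume (Prod.mk x ⁻¹' S) ≤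
      T.indicator (fun _ => min (volume (Jset j₁)) (volume (Jset j₂))) x := by
    intro x
    by_cases hx : x ∈ T
    · rw [Set.indicator_of_mem hx]
      refine le_min ?_ ?_
      · have hsub : Prod.mk x ⁻¹' S ⊆ (fun y => y - omega α x) ⁻¹' Jset j₁ :=
          fun y hy => hy.1.2
        refine (measure_mono hsub).trans_eq ?_
        have : (fun y : ℝ => y - omega α x) = (fun y : ℝ => y + (-omega α x)) := by
          funext y; ring
        rw [this]
        exact measure_preimage_add_right volume _ _
      · have hsub : Prod.mk x ⁻¹' S ⊆
            (fun y => σ * y + (c.2 - omega α (σ * x + c.1))) ⁻¹' Jset j₂ := by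
          intro y hy
          have h2 := hy.2.2
          show σ * y + (c.2 - omega α (σ * x + c.1)) ∈ Jset j₂
          have : σ * y + (c.2 - omega α (σ * x + c.1)) = σ * y + c.2 - omega α (σ * x + c.1) := by
            ring
          rw [this]
          exact h2
        refine (measure_mono hsub).trans_eq ?_
        exact vol_affine_preimage σ _ hσ _
    · rw [Set.indicator_of_notMem hx]
      have hemp : Prod.mk x ⁻¹' S = (∅ : Set ℝ) := by
        ext y
        simp only [Set.mem_preimage, Set.mem_empty_iff_false, iff_false]
        intro hy
        exact hx ⟨hy.1.1, hy.2.1⟩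
      rw [hemp, measure_empty]
  calc ∫⁻ x, volume (Prod.mk x ⁻¹' S) ≤
      ∫⁻ x, T.indicator (fun _ => min (volume (Jset j₁)) (volume (Jset j₂))) x :=
        lintegral_mono key
    _ = volume T * min (volume (Jset j₁)) (volume (Jset j₂)) := by
        rw [lintegral_indicator_const hT]; ring
    _ ≤ min (volume (Uset k₁)) (volume (Uset k₂)) *
        min (volume (Jset j₁)) (volume (Jset j₂)) := by
        refine mul_le_mul_left (le_min ?_ ?_) _
        · exact measure_mono Set.inter_subset_left
        · refine (measure_mono Set.inter_subset_right).trans ?_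
          exact (vol_affine_preimage σ c.1 hσ (Uset k₂)).le

section Analysis

variable {α : ℝ} {k₁ k₂ k₃ : ℤ} {j₁ j₂ j₃ : ℕ} {g₁ g₂ : ℝ × ℝ → ℂ}

/-- squared enorm, as an `ℝ≥0∞`-valued function -/
def sq2 (g : ℝ × ℝ → ℂ) (p : ℝ × ℝ) : ℝ≥0∞ := (‖g p‖₊ : ℝ≥0∞) ^ (2 : ℝ)

lemma sq2_ne_top (g : ℝ × ℝ → ℂ) (p : ℝ × ℝ) : sq2 g p ≠ ⊤ :=
  ENNReal.rpow_ne_top_of_nonneg (by norm_num) ENNReal.coe_ne_top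

lemma measurable_sq2 (hm : Measurable g₁) : Measurable (sq2 g₁) :=
  (hm.nnnorm.coe_nnreal_ennreal).pow_const _

lemma conv2_eq (f g : ℝ × ℝ → ℂ) (q : ℝ × ℝ) :
    conv2 f g q = ∫ p : ℝ × ℝ, f p * g (q - p) := rfl

lemma h22 : Real.HolderConjugate 2 2 := Real.HolderConjugate.two_two

lemma enorm_conv2_le (g₁ g₂ : ℝ × ℝ → ℂ) (q : ℝ × ℝ) :
    (‖conv2 g₁ g₂ q‖₊ : ℝ≥0∞) ≤ ∫⁻ p, (‖g₁ p‖₊ : ℝ≥0∞) * (‖g₂ (q - p)‖₊ : ℝ≥0∞) := by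
  rw [conv2_eq]
  refine (enorm_integral_le_lintegral_enorm _).trans_eq ?_
  refine lintegral_congr fun p => ?_
  simp [nnnorm_mul, ENNReal.coe_mul]; rfl

/-- squaring an `ℝ≥0∞` product bound -/
lemma sq_le_of_le {x a b : ℝ≥0∞} (h : x ≤ a ^ (1/2 : ℝ) * b ^ (1/2 : ℝ)) :
    x ^ (2 : ℝ) ≤ a * b := by
  calc x ^ (2:ℝ) ≤ (a ^ (1/2:ℝ) * b ^ (1/2:ℝ)) ^ (2:ℝ) := ENNReal.rpow_le_rpow h (by norm_num)
    _ = a * b := by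
      rw [ENNReal.mul_rpow_of_nonneg _ _ (by norm_num : (0:ℝ) ≤ 2),
        ← ENNReal.rpow_mul, ← ENNReal.rpow_mul]
      norm_num

/-- Bound (A): pair (1,2). -/
lemma boundA (hm₁ : Measurable g₁) (hm₂ : Measurable g₂)
    (hs₁ : Function.support g₁ ⊆ Vset α k₁ j₁)
    (hs₂ : Function.support g₂ ⊆ Vset α k₂ j₂) :
    ∫⁻ q, (Vset α k₃ j₃).indicator 1 q * sq2 (conv2 g₁ g₂) q ≤
      (min (volume (Uset k₁)) (volume (Uset k₂)) *
        min (volume (Jset j₁)) (volume (Jset j₂))) *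
      ((∫⁻ p, sq2 g₁ p) * (∫⁻ p, sq2 g₂ p)) := by
  set M : ℝ≥0∞ := min (volume (Uset k₁)) (volume (Uset k₂)) *
        min (volume (Jset j₁)) (volume (Jset j₂)) with hMdef
  have hMne : M ≠ ⊤ := by
    exact ENNReal.mul_ne_top
      (ne_top_of_le_ne_top (volume_Uset_ne_top k₁) (min_le_left _ _))
      (ne_top_of_le_ne_top (volume_Jset_ne_top j₁) (min_le_left _ _))
  -- the sliding support set
  have key : ∀ q : ℝ × ℝ, sq2 (conv2 g₁ g₂) q ≤
      M * ∫⁻ p, sq2 g₁ p * sq2 g₂ (q - p) := by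
    intro q
    set S : Set (ℝ × ℝ) := Vset α k₁ j₁ ∩ (fun p => q - p) ⁻¹' Vset α k₂ j₂ with hSdef
    have hSm : MeasurableSet S :=
      (measurableSet_Vset α k₁ j₁).inter
        ((measurable_const.sub measurable_id) (measurableSet_Vset α k₂ j₂))
    have hSvol : volume S ≤ M := by
      refine le_trans (le_of_eq ?_) (fiber_bound α k₁ k₂ j₁ j₂ (-1)
        (Or.inr rfl) q)
      congr 1
      ext p
      have h1 : (-1 * p.1 + q.1, -1 * p.2 + q.2) = q - p := by
        simp [Prod.ext_iff]; constructor <;> ring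
      simp only [hSdef, Set.mem_inter_iff, Set.mem_preimage, Set.mem_setOf_eq, h1]
    -- Hölder
    have hfm : AEMeasurable (S.indicator (fun _ => (1:ℝ≥0∞))) volume :=
      (measurable_const.indicator hSm).aemeasurable
    have hgm : AEMeasurable (fun p => (‖g₁ p‖₊ : ℝ≥0∞) * (‖g₂ (q - p)‖₊ : ℝ≥0∞)) volume := by
      exact ((hm₁.nnnorm.coe_nnreal_ennreal).mul
        ((hm₂.nnnorm.coe_nnreal_ennreal).comp (measurable_const.sub measurable_id))).aemeasurable
    have heq : ∀ p, (‖g₁ p‖₊ : ℝ≥0∞) * (‖g₂ (q - p)‖₊ : ℝ≥0∞) =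
        (S.indicator (fun _ => (1:ℝ≥0∞)) * fun p => (‖g₁ p‖₊ : ℝ≥0∞) * (‖g₂ (q - p)‖₊ : ℝ≥0∞)) p := by
      intro p
      by_cases hp : p ∈ S
      · simp [Set.indicator_of_mem hp]
      · have : g₁ p = 0 ∨ g₂ (q - p) = 0 := by
          by_contra hcon
          push_neg at hcon
          exact hp ⟨hs₁ hcon.1, hs₂ hcon.2⟩
        rcases this with h | h <;> simp [h]
    have hhold := ENNReal.lintegral_mul_le_Lp_mul_Lq volume h22 hfm hgm
    have hF : ∫⁻ p, (S.indicator (fun _ => (1:ℝ≥0∞))) p ^ (2:ℝ) = volume S := by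
      rw [← lintegral_indicator_one hSm]
      refine lintegral_congr fun p => ?_
      by_cases hp : p ∈ S <;> simp [Set.indicator_of_mem, Set.indicator_of_notMem, hp,
        ENNReal.zero_rpow_of_pos, ENNReal.one_rpow]
    have h1 : (‖conv2 g₁ g₂ q‖₊ : ℝ≥0∞) ≤
        (volume S) ^ (1/2:ℝ) * (∫⁻ p, ((‖g₁ p‖₊ : ℝ≥0∞) * (‖g₂ (q - p)‖₊ : ℝ≥0∞)) ^ (2:ℝ)) ^ (1/2:ℝ) := by
      refine (enorm_conv2_le g₁ g₂ q).trans ?_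
      calc ∫⁻ p, (‖g₁ p‖₊ : ℝ≥0∞) * (‖g₂ (q - p)‖₊ : ℝ≥0∞)
          = ∫⁻ p, (S.indicator (fun _ => (1:ℝ≥0∞)) * fun p => (‖g₁ p‖₊ : ℝ≥0∞) * (‖g₂ (q - p)‖₊ : ℝ≥0∞)) p :=
            lintegral_congr heq
        _ ≤ _ := hhold.trans (by rw [hF])
    have h2 := sq_le_of_le h1
    refine h2.trans ?_
    refine mul_le_mul' hSvol (le_of_eq ?_)
    refine lintegral_congr fun p => ?_
    rw [ENNReal.mul_rpow_of_nonneg _ _ (by norm_num : (0:ℝ) ≤ 2)]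
    rfl
  calc ∫⁻ q, (Vset α k₃ j₃).indicator 1 q * sq2 (conv2 g₁ g₂) q
      ≤ ∫⁻ q, M * ∫⁻ p, sq2 g₁ p * sq2 g₂ (q - p) := by
        refine lintegral_mono fun q => ?_
        calc (Vset α k₃ j₃).indicator 1 q * sq2 (conv2 g₁ g₂) q
            ≤ 1 * (M * ∫⁻ p, sq2 g₁ p * sq2 g₂ (q - p)) :=
              mul_le_mul' (by by_cases hq : q ∈ Vset α k₃ j₃ <;> simp [hq]) (key q)
          _ = _ := one_mul _
    _ = M * ∫⁻ q, ∫⁻ p, sq2 g₁ p * sq2 g₂ (q - p) := lintegral_const_mul' M _ hMne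
    _ = M * ∫⁻ p, ∫⁻ q, sq2 g₁ p * sq2 g₂ (q - p) := by
        congr 1
        refine lintegral_lintegral_swap ?_
        exact (((measurable_sq2 hm₁).comp measurable_snd).mul
          ((measurable_sq2 hm₂).comp (measurable_fst.sub measurable_snd))).aemeasurable
    _ = M * ((∫⁻ p, sq2 g₁ p) * (∫⁻ p, sq2 g₂ p)) := by
        congr 1
        calc ∫⁻ p, ∫⁻ q, sq2 g₁ p * sq2 g₂ (q - p)
            = ∫⁻ p, sq2 g₁ p * ∫⁻ q, sq2 g₂ (q - p) := by
              refine lintegral_congr fun p => ?_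
              exact lintegral_const_mul' _ _ (sq2_ne_top g₁ p)
          _ = ∫⁻ p, sq2 g₁ p * ∫⁻ q, sq2 g₂ q := by
              refine lintegral_congr fun p => ?_
              rw [lintegral_sub_right_eq_self (sq2 g₂) p]
          _ = (∫⁻ p, sq2 g₁ p) * (∫⁻ p, sq2 g₂ p) :=
              lintegral_mul_const _ (measurable_sq2 hm₁)

end Analysis

section Analysis2
variable {α : ℝ} {k₁ k₂ k₃ : ℤ} {j₁ j₂ j₃ : ℕ} {g₁ g₂ : ℝ × ℝ → ℂ}

lemma ind_ne_top (s : Set (ℝ × ℝ)) (q : ℝ × ℝ) : s.indicator (1 : ℝ×ℝ→ℝ≥0∞) q ≠ ⊤ := by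
  by_cases hq : q ∈ s <;> simp [hq]

/-- Bound (B): pair (1,3). -/
lemma boundB (hm₁ : Measurable g₁) (hm₂ : Measurable g₂)
    (hs₁ : Function.support g₁ ⊆ Vset α k₁ j₁)
    (hA₁ : (∫⁻ p, sq2 g₁ p) ≠ ⊤) :
    ∫⁻ q, (Vset α k₃ j₃).indicator 1 q * sq2 (conv2 g₁ g₂) q ≤
      (min (volume (Uset k₁)) (volume (Uset k₃)) *
        min (volume (Jset j₁)) (volume (Jset j₃))) *
      ((∫⁻ p, sq2 g₁ p) * (∫⁻ p, sq2 g₂ p)) := by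
  set M : ℝ≥0∞ := min (volume (Uset k₁)) (volume (Uset k₃)) *
        min (volume (Jset j₁)) (volume (Jset j₃)) with hMdef
  set A₁ : ℝ≥0∞ := ∫⁻ p, sq2 g₁ p with hA₁def
  set I₁ : ℝ × ℝ → ℝ≥0∞ := (Vset α k₁ j₁).indicator 1 with hI₁def
  set I₃ : ℝ × ℝ → ℝ≥0∞ := (Vset α k₃ j₃).indicator 1 with hI₃def
  have hI₁m : Measurable I₁ := measurable_const.indicator (measurableSet_Vset α k₁ j₁)
  have hI₃m : Measurable I₃ := measurable_const.indicator (measurableSet_Vset α k₃ j₃)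
  -- pointwise Cauchy-Schwarz
  have key : ∀ q : ℝ × ℝ, sq2 (conv2 g₁ g₂) q ≤
      A₁ * ∫⁻ p, I₁ p * sq2 g₂ (q - p) := by
    intro q
    have hfm : AEMeasurable (fun p => (‖g₁ p‖₊ : ℝ≥0∞)) volume :=
      (hm₁.nnnorm.coe_nnreal_ennreal).aemeasurable
    have hgm : AEMeasurable (fun p => I₁ p * (‖g₂ (q - p)‖₊ : ℝ≥0∞)) volume :=
      (hI₁m.mul ((hm₂.nnnorm.coe_nnreal_ennreal).comp
        (measurable_const.sub measurable_id))).aemeasurable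
    have heq : ∀ p, (‖g₁ p‖₊ : ℝ≥0∞) * (‖g₂ (q - p)‖₊ : ℝ≥0∞) =
        ((fun p => (‖g₁ p‖₊ : ℝ≥0∞)) * fun p => I₁ p * (‖g₂ (q - p)‖₊ : ℝ≥0∞)) p := by
      intro p
      by_cases hp : p ∈ Vset α k₁ j₁
      · simp [hI₁def, Set.indicator_of_mem hp, mul_left_comm, mul_comm]
      · have h0 : g₁ p = 0 := by
          by_contra hcon
          exact hp (hs₁ hcon)
        simp [h0]
    have hhold := ENNReal.lintegral_mul_le_Lp_mul_Lq volume h22 hfm hgm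
    have h1 : (‖conv2 g₁ g₂ q‖₊ : ℝ≥0∞) ≤
        A₁ ^ (1/2:ℝ) * (∫⁻ p, (I₁ p * (‖g₂ (q - p)‖₊ : ℝ≥0∞)) ^ (2:ℝ)) ^ (1/2:ℝ) := by
      refine (enorm_conv2_le g₁ g₂ q).trans ?_
      refine le_trans (le_of_eq (lintegral_congr heq)) (hhold.trans ?_)
      exact le_of_eq rfl
    have h2 := sq_le_of_le h1
    refine h2.trans (le_of_eq ?_)
    congr 1
    refine lintegral_congr fun p => ?_
    rw [ENNReal.mul_rpow_of_nonneg _ _ (by norm_num : (0:ℝ) ≤ 2)]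
    by_cases hp : p ∈ Vset α k₁ j₁ <;>
      simp [hI₁def, Set.indicator_of_mem, Set.indicator_of_notMem, hp,
        ENNReal.zero_rpow_of_pos, ENNReal.one_rpow, sq2]
  -- integrate
  have hjoint1 : AEMeasurable (Function.uncurry fun (q p : ℝ × ℝ) =>
      I₃ q * (I₁ p * sq2 g₂ (q - p))) ((volume : Measure (ℝ×ℝ)).prod volume) := by
    exact ((hI₃m.comp measurable_fst).mul ((hI₁m.comp measurable_snd).mul
      ((measurable_sq2 hm₂).comp (measurable_fst.sub measurable_snd)))).aemeasurable
  have hjoint2 : AEMeasurable (Function.uncurry fun (q p : ℝ × ℝ) =>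
      I₁ p * (I₃ (q + p) * sq2 g₂ q)) ((volume : Measure (ℝ×ℝ)).prod volume) := by
    exact ((hI₁m.comp measurable_snd).mul ((hI₃m.comp (measurable_fst.add measurable_snd)).mul
      ((measurable_sq2 hm₂).comp measurable_fst))).aemeasurable
  calc ∫⁻ q, I₃ q * sq2 (conv2 g₁ g₂) q
      ≤ ∫⁻ q, A₁ * (I₃ q * ∫⁻ p, I₁ p * sq2 g₂ (q - p)) := by
        refine lintegral_mono fun q => ?_
        rw [mul_left_comm]
        exact mul_le_mul' le_rfl (key q)
    _ = A₁ * ∫⁻ q, I₃ q * ∫⁻ p, I₁ p * sq2 g₂ (q - p) := lintegral_const_mul' _ _ hA₁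
    _ = A₁ * ∫⁻ q, ∫⁻ p, I₃ q * (I₁ p * sq2 g₂ (q - p)) := by
        congr 1
        exact lintegral_congr fun q => (lintegral_const_mul' _ _ (ind_ne_top _ q)).symm
    _ = A₁ * ∫⁻ p, ∫⁻ q, I₃ q * (I₁ p * sq2 g₂ (q - p)) := by
        congr 1
        exact lintegral_lintegral_swap hjoint1
    _ = A₁ * ∫⁻ p, ∫⁻ q, I₁ p * (I₃ (q + p) * sq2 g₂ q) := by
        congr 1
        refine lintegral_congr fun p => ?_
        calc ∫⁻ q, I₃ q * (I₁ p * sq2 g₂ (q - p))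
            = ∫⁻ q, I₃ (q + p) * (I₁ p * sq2 g₂ (q + p - p)) :=
              (lintegral_add_right_eq_self (fun x => I₃ x * (I₁ p * sq2 g₂ (x - p))) p).symm
          _ = ∫⁻ q, I₁ p * (I₃ (q + p) * sq2 g₂ q) := by
              refine lintegral_congr fun q => ?_
              rw [add_sub_cancel_right, mul_left_comm]
    _ = A₁ * ∫⁻ q, ∫⁻ p, I₁ p * (I₃ (q + p) * sq2 g₂ q) := by
        congr 1
        exact (lintegral_lintegral_swap hjoint2).symm
    _ = A₁ * ∫⁻ q, sq2 g₂ q * ∫⁻ p, I₁ p * I₃ (q + p) := by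
        congr 1
        refine lintegral_congr fun q => ?_
        rw [← lintegral_const_mul' _ _ (sq2_ne_top g₂ q)]
        exact lintegral_congr fun p => by ring
    _ ≤ A₁ * ∫⁻ q, sq2 g₂ q * M := by
        refine mul_le_mul' le_rfl (lintegral_mono fun q => mul_le_mul' le_rfl ?_)
        -- ∫⁻ p, I₁ p * I₃ (q + p) = volume of the intersection set
        have hWm : MeasurableSet (Vset α k₁ j₁ ∩ (fun p : ℝ×ℝ => q + p) ⁻¹' Vset α k₃ j₃) :=
          (measurableSet_Vset α k₁ j₁).inter
            ((measurable_const.add measurable_id) (measurableSet_Vset α k₃ j₃))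
        have heqW : ∀ p : ℝ × ℝ, I₁ p * I₃ (q + p) =
            (Vset α k₁ j₁ ∩ (fun p : ℝ×ℝ => q + p) ⁻¹' Vset α k₃ j₃).indicator 1 p := by
          intro p
          by_cases h1 : p ∈ Vset α k₁ j₁ <;> by_cases h3 : q + p ∈ Vset α k₃ j₃ <;>
            simp [hI₁def, hI₃def, Set.indicator_apply, h1, h3, Set.mem_inter_iff, Set.mem_preimage]
        rw [lintegral_congr heqW, lintegral_indicator_one hWm]
        refine le_trans (le_of_eq ?_) (fiber_bound α k₁ k₃ j₁ j₃ 1 (Or.inl rfl) q)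
        congr 1
        ext p
        have h1 : (1 * p.1 + q.1, 1 * p.2 + q.2) = q + p := by
          simp [Prod.ext_iff]; constructor <;> ring
        simp only [Set.mem_inter_iff, Set.mem_preimage, Set.mem_setOf_eq, h1]
    _ = M * (A₁ * ∫⁻ p, sq2 g₂ p) := by
        rw [lintegral_mul_const _ (measurable_sq2 hm₂)]
        ring
    _ = M * (A₁ * ∫⁻ p, sq2 g₂ p) := rfl

/-- commutativity of `conv2` -/
lemma conv2_comm (g₁ g₂ : ℝ × ℝ → ℂ) (q : ℝ × ℝ) : conv2 g₁ g₂ q = conv2 g₂ g₁ q := by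
  rw [conv2_eq, conv2_eq]
  have hmp : MeasurePreserving (fun p : ℝ × ℝ => q - p) volume volume :=
    Measure.measurePreserving_sub_left volume q
  have hemb : MeasurableEmbedding (fun p : ℝ × ℝ => q - p) := by
    have : (fun p : ℝ × ℝ => q - p) = ⇑(MeasurableEquiv.subLeft q) := by
      funext p; simp [MeasurableEquiv.subLeft]; rfl
    rw [this]
    exact (MeasurableEquiv.subLeft q).measurableEmbedding
  calc (∫ p : ℝ×ℝ, g₁ p * g₂ (q - p))
      = ∫ p : ℝ×ℝ, g₁ (q - p) * g₂ (q - (q - p)) :=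
        (hmp.integral_comp hemb (fun p => g₁ p * g₂ (q - p))).symm
    _ = ∫ p : ℝ×ℝ, g₂ p * g₁ (q - p) := by
        refine integral_congr_ae (Filter.Eventually.of_forall fun p => ?_)
        show g₁ (q - p) * g₂ (q - (q - p)) = g₂ p * g₁ (q - p)
        rw [sub_sub_cancel, mul_comm]
end Analysis2

section Final

lemma min3_eq {β : Type*} [LinearOrder β] (a b c : β) :
    min (min a b) c = a ∨ min (min a b) c = b ∨ min (min a b) c = c := by
  rcases min_cases (min a b) c with ⟨h, -⟩ | ⟨h, -⟩
  · rcases min_cases a b with ⟨h', -⟩ | ⟨h', -⟩ <;> rw [h, h'] <;> tauto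
  · tauto

lemma pair_min_le' {a b c A B C K L : ℝ≥0∞}
    (h12 : L ≤ min a b * min A B * K) (h13 : L ≤ min a c * min A C * K)
    (h23 : L ≤ min b c * min B C * K) :
    L ≤ min (min a b) c * min (min A B) C * K := by
  rcases min3_eq a b c with h | h | h <;> rw [h] <;>
    rcases min3_eq A B C with h' | h' | h' <;> rw [h'] <;>
    first
      | exact h12.trans (mul_le_mul_left (mul_le_mul' (min_le_left _ _) (min_le_left _ _)) K)
      | exact h12.trans (mul_le_mul_left (mul_le_mul' (min_le_left _ _) (min_le_right _ _)) K)
      | exact h12.trans (mul_le_mul_left (mul_le_mul' (min_le_right _ _) (min_le_left _ _)) K)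
      | exact h12.trans (mul_le_mul_left (mul_le_mul' (min_le_right _ _) (min_le_right _ _)) K)
      | exact h13.trans (mul_le_mul_left (mul_le_mul' (min_le_left _ _) (min_le_left _ _)) K)
      | exact h13.trans (mul_le_mul_left (mul_le_mul' (min_le_left _ _) (min_le_right _ _)) K)
      | exact h13.trans (mul_le_mul_left (mul_le_mul' (min_le_right _ _) (min_le_left _ _)) K)
      | exact h13.trans (mul_le_mul_left (mul_le_mul' (min_le_right _ _) (min_le_right _ _)) K)
      | exact h23.trans (mul_le_mul_left (mul_le_mul' (min_le_left _ _) (min_le_left _ _)) K)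
      | exact h23.trans (mul_le_mul_left (mul_le_mul' (min_le_left _ _) (min_le_right _ _)) K)
      | exact h23.trans (mul_le_mul_left (mul_le_mul' (min_le_right _ _) (min_le_left _ _)) K)
      | exact h23.trans (mul_le_mul_left (mul_le_mul' (min_le_right _ _) (min_le_right _ _)) K)

lemma sq_eLpNorm (h : ℝ × ℝ → ℂ) :
    (eLpNorm h 2 volume) ^ (2:ℝ) = ∫⁻ q, sq2 h q := by
  rw [eLpNorm_eq_lintegral_rpow_enorm_toReal (by norm_num) (by norm_num)]
  rw [← ENNReal.rpow_mul]
  norm_num [sq2]; rfl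

lemma lint_indicator_sq (s : Set (ℝ × ℝ)) (h : ℝ × ℝ → ℂ) :
    ∫⁻ q, sq2 (s.indicator h) q = ∫⁻ q, s.indicator 1 q * sq2 h q := by
  refine lintegral_congr fun q => ?_
  by_cases hq : q ∈ s <;>
    simp [sq2, Set.indicator_of_mem, Set.indicator_of_notMem, hq,
      ENNReal.zero_rpow_of_pos]

end Final


/-- Bilinear convolution estimate with the measure of the smallest frequency block. -/
theorem statement11 (α : ℝ) (hα : α ∈ Set.Ioo (1 : ℝ) 2) :
    ∃ C : ℝ, 0 < C ∧
      ∀ (k₁ k₂ k₃ : ℤ) (j₁ j₂ j₃ : ℕ) (f₁ f₂ : ℝ × ℝ → ℂ),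
        MemLp f₁ 2 volume → MemLp f₂ 2 volume →
        Function.support f₁ ⊆ Vset α k₁ j₁ →
        Function.support f₂ ⊆ Vset α k₂ j₂ →
        (eLpNorm ((Vset α k₃ j₃).indicator (conv2 f₁ f₂)) 2 volume).toReal ≤
          C * (min (min (volume (Uset k₁)).toReal (volume (Uset k₂)).toReal)
                (volume (Uset k₃)).toReal) ^ (1 / 2 : ℝ) *
            (2 : ℝ) ^ (((min (min j₁ j₂) j₃ : ℕ) : ℝ) / 2) *
            (L2N f₁ * L2N f₂) := by
  classical
  refine ⟨2, by norm_num, ?_⟩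
  intro k₁ k₂ k₃ j₁ j₂ j₃ f₁ f₂ h₁ h₂ hs₁ hs₂
  set g₁ : ℝ × ℝ → ℂ := (Vset α k₁ j₁).indicator (h₁.aestronglyMeasurable.mk f₁) with hg₁def
  set g₂ : ℝ × ℝ → ℂ := (Vset α k₂ j₂).indicator (h₂.aestronglyMeasurable.mk f₂) with hg₂def
  have hg₁m : Measurable g₁ :=
    (h₁.aestronglyMeasurable.stronglyMeasurable_mk.measurable).indicator
      (measurableSet_Vset α k₁ j₁)
  have hg₂m : Measurable g₂ :=
    (h₂.aestronglyMeasurable.stronglyMeasurable_mk.measurable).indicator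
      (measurableSet_Vset α k₂ j₂)
  have hg₁ae : g₁ =ᵐ[volume] f₁ := by
    filter_upwards [h₁.aestronglyMeasurable.ae_eq_mk] with q hq
    by_cases hqv : q ∈ Vset α k₁ j₁
    · simp [hg₁def, Set.indicator_of_mem hqv, ← hq]
    · have h0 : f₁ q = 0 := by
        by_contra hc; exact hqv (hs₁ hc)
      simp [hg₁def, Set.indicator_of_notMem hqv, h0]
  have hg₂ae : g₂ =ᵐ[volume] f₂ := by
    filter_upwards [h₂.aestronglyMeasurable.ae_eq_mk] with q hq
    by_cases hqv : q ∈ Vset α k₂ j₂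
    · simp [hg₂def, Set.indicator_of_mem hqv, ← hq]
    · have h0 : f₂ q = 0 := by
        by_contra hc; exact hqv (hs₂ hc)
      simp [hg₂def, Set.indicator_of_notMem hqv, h0]
  have hg₁s : Function.support g₁ ⊆ Vset α k₁ j₁ := Set.support_indicator_subset
  have hg₂s : Function.support g₂ ⊆ Vset α k₂ j₂ := Set.support_indicator_subset
  -- convolutions agree
  have hconv : conv2 f₁ f₂ = conv2 g₁ g₂ := by
    funext q
    rw [conv2_eq, conv2_eq]
    refine integral_congr_ae ?_
    have hmp : MeasurePreserving (fun p : ℝ × ℝ => q - p) volume volume :=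
      Measure.measurePreserving_sub_left volume q
    have h2 : (f₂ ∘ fun p : ℝ × ℝ => q - p) =ᵐ[volume] (g₂ ∘ fun p : ℝ × ℝ => q - p) :=
      hmp.quasiMeasurePreserving.ae_eq_comp hg₂ae.symm
    simp only [Function.comp_def] at h2
    exact (hg₁ae.symm).mul h2
  -- norms
  set E₁ : ℝ≥0∞ := eLpNorm f₁ 2 volume with hE₁def
  set E₂ : ℝ≥0∞ := eLpNorm f₂ 2 volume with hE₂def
  have hE₁ne : E₁ ≠ ⊤ := h₁.eLpNorm_ne_top
  have hE₂ne : E₂ ≠ ⊤ := h₂.eLpNorm_ne_top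
  have hA₁ : ∫⁻ p, sq2 g₁ p = E₁ ^ (2:ℝ) := by
    rw [← sq_eLpNorm, eLpNorm_congr_ae hg₁ae]
  have hA₂ : ∫⁻ p, sq2 g₂ p = E₂ ^ (2:ℝ) := by
    rw [← sq_eLpNorm, eLpNorm_congr_ae hg₂ae]
  have hA₁ne : (∫⁻ p, sq2 g₁ p) ≠ ⊤ := by
    rw [hA₁]; exact ENNReal.rpow_ne_top_of_nonneg (by norm_num) hE₁ne
  have hA₂ne : (∫⁻ p, sq2 g₂ p) ≠ ⊤ := by
    rw [hA₂]; exact ENNReal.rpow_ne_top_of_nonneg (by norm_num) hE₂ne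
  -- the squared LHS
  set S : ℝ≥0∞ := eLpNorm ((Vset α k₃ j₃).indicator (conv2 f₁ f₂)) 2 volume with hSdef
  set L : ℝ≥0∞ := ∫⁻ q, (Vset α k₃ j₃).indicator 1 q * sq2 (conv2 g₁ g₂) q with hLdef
  have hS2 : S ^ (2:ℝ) = L := by
    rw [hSdef, hconv, sq_eLpNorm, lint_indicator_sq]
  -- the three bounds
  have h12 : L ≤ (min (volume (Uset k₁)) (volume (Uset k₂)) *
      min (volume (Jset j₁)) (volume (Jset j₂))) * ((∫⁻ p, sq2 g₁ p) * (∫⁻ p, sq2 g₂ p)) :=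
    boundA hg₁m hg₂m hg₁s hg₂s
  have h13 : L ≤ (min (volume (Uset k₁)) (volume (Uset k₃)) *
      min (volume (Jset j₁)) (volume (Jset j₃))) * ((∫⁻ p, sq2 g₁ p) * (∫⁻ p, sq2 g₂ p)) :=
    boundB hg₁m hg₂m hg₁s hA₁ne
  have hcomm : L = ∫⁻ q, (Vset α k₃ j₃).indicator 1 q * sq2 (conv2 g₂ g₁) q := by
    refine lintegral_congr fun q => ?_
    simp [sq2, conv2_comm g₁ g₂ q]
  have h23 : L ≤ (min (volume (Uset k₂)) (volume (Uset k₃)) *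
      min (volume (Jset j₂)) (volume (Jset j₃))) * ((∫⁻ p, sq2 g₁ p) * (∫⁻ p, sq2 g₂ p)) := by
    rw [hcomm]
    refine (boundB hg₂m hg₁m hg₂s hA₂ne).trans (le_of_eq ?_)
    ring
  have hmin : L ≤ (min (min (volume (Uset k₁)) (volume (Uset k₂))) (volume (Uset k₃)) *
      min (min (volume (Jset j₁)) (volume (Jset j₂))) (volume (Jset j₃))) *
      ((∫⁻ p, sq2 g₁ p) * (∫⁻ p, sq2 g₂ p)) :=
    pair_min_le' h12 h13 h23
  -- control the J-min
  set jm : ℕ := min (min j₁ j₂) j₃ with hjmdef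
  have hJm : min (min (volume (Jset j₁)) (volume (Jset j₂))) (volume (Jset j₃)) ≤
      ENNReal.ofReal (2 ^ (jm + 2)) := by
    refine le_trans ?_ (volume_Jset_le jm)
    rcases min3_eq j₁ j₂ j₃ with h | h | h <;> rw [hjmdef, h]
    · exact (min_le_left _ _).trans (min_le_left _ _)
    · exact (min_le_left _ _).trans (min_le_right _ _)
    · exact min_le_right _ _
  set Um : ℝ≥0∞ := min (min (volume (Uset k₁)) (volume (Uset k₂))) (volume (Uset k₃))
    with hUmdef
  have hUmne : Um ≠ ⊤ :=
    ne_top_of_le_ne_top (volume_Uset_ne_top k₃) (min_le_right _ _)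
  have hmin2 : S ^ (2:ℝ) ≤ (Um * ENNReal.ofReal (2 ^ (jm + 2))) * (E₁ ^ (2:ℝ) * E₂ ^ (2:ℝ)) := by
    rw [hS2, ← hA₁, ← hA₂]
    refine hmin.trans (mul_le_mul' (mul_le_mul' le_rfl hJm) le_rfl)
  -- take square roots
  have hsqrt : S ≤ Um ^ (1/2:ℝ) * (ENNReal.ofReal (2 ^ (jm + 2))) ^ (1/2:ℝ) * (E₁ * E₂) := by
    have h := ENNReal.rpow_le_rpow hmin2 (by norm_num : (0:ℝ) ≤ 1/2)
    calc S = (S ^ (2:ℝ)) ^ (1/2:ℝ) := by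
          rw [← ENNReal.rpow_mul]; norm_num
      _ ≤ ((Um * ENNReal.ofReal (2 ^ (jm + 2))) * (E₁ ^ (2:ℝ) * E₂ ^ (2:ℝ))) ^ (1/2:ℝ) := h
      _ = Um ^ (1/2:ℝ) * (ENNReal.ofReal (2 ^ (jm + 2))) ^ (1/2:ℝ) * (E₁ * E₂) := by
          rw [ENNReal.mul_rpow_of_nonneg _ _ (by norm_num : (0:ℝ) ≤ 1/2),
            ENNReal.mul_rpow_of_nonneg _ _ (by norm_num : (0:ℝ) ≤ 1/2),
            ENNReal.mul_rpow_of_nonneg _ _ (by norm_num : (0:ℝ) ≤ 1/2),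
            ← ENNReal.rpow_mul E₁, ← ENNReal.rpow_mul E₂]
          norm_num
  -- pass to real numbers
  have hRne : Um ^ (1/2:ℝ) * (ENNReal.ofReal (2 ^ (jm + 2))) ^ (1/2:ℝ) * (E₁ * E₂) ≠ ⊤ := by
    refine ENNReal.mul_ne_top (ENNReal.mul_ne_top ?_ ?_) (ENNReal.mul_ne_top hE₁ne hE₂ne)
    · exact ENNReal.rpow_ne_top_of_nonneg (by norm_num) hUmne
    · exact ENNReal.rpow_ne_top_of_nonneg (by norm_num) ENNReal.ofReal_ne_top
  have hmain := ENNReal.toReal_mono hRne hsqrt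
  refine hmain.trans (le_of_eq ?_)
  rw [ENNReal.toReal_mul, ENNReal.toReal_mul, ENNReal.toReal_mul]
  have e1 : (Um ^ (1/2:ℝ)).toReal =
      (min (min (volume (Uset k₁)).toReal (volume (Uset k₂)).toReal)
        (volume (Uset k₃)).toReal) ^ (1/2:ℝ) := by
    rw [← ENNReal.toReal_rpow, hUmdef,
      ENNReal.toReal_min (ne_top_of_le_ne_top (volume_Uset_ne_top k₁) (min_le_left _ _))
        (volume_Uset_ne_top k₃),
      ENNReal.toReal_min (volume_Uset_ne_top k₁) (volume_Uset_ne_top k₂)]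
  have e2 : ((ENNReal.ofReal (2 ^ (jm + 2))) ^ (1/2:ℝ)).toReal =
      2 * (2:ℝ) ^ ((jm : ℝ) / 2) := by
    rw [← ENNReal.toReal_rpow, ENNReal.toReal_ofReal (by positivity)]
    rw [← Real.rpow_natCast 2 (jm + 2), ← Real.rpow_mul (by norm_num : (0:ℝ) ≤ 2)]
    push_cast
    rw [show ((jm : ℝ) + 2) * (1/2) = (jm : ℝ)/2 + 1 by ring,
      Real.rpow_add (by norm_num : (0:ℝ) < 2), Real.rpow_one]
    ring
  rw [e1, e2]
  simp only [L2N, hE₁def, hE₂def]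
  ring
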